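/- The quotient of 𝔤 by the Lie ideal generated by x'_n is isomorphic to the Borel subalgebra 𝔟_B of the simple complex Lie algebra of type B_n, and the quotient of 𝔤 by the Lie ideal generated by x_n is isomorphic to the Borel subalgebra 𝔟_C of type C_n. -/

import Mathlib

/-! We work with N = n + 2 vertices (so the paper's `n` is `n + 2`, covering all n ≥ 2).
Generators: `Sum.inl i` is x_i, `Sum.inr (Sum.inl i)` is h_i, `Sum.inr (Sum.inr ())` is x'_n,
all 0-indexed (the paper's index i corresponds to i - 1). -/

/-- The free complex Lie algebra on the generators x_1,…,x_N, h_1,…,h_N, x'_N. -/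
abbrev FL (n : ℕ) : Type :=
  FreeLieAlgebra ℂ (Fin (n + 2) ⊕ (Fin (n + 2) ⊕ Unit))

/-- The generator x_i. -/
noncomputable def Xg {n : ℕ} (i : Fin (n + 2)) : FL n :=
  FreeLieAlgebra.of ℂ (Sum.inl i)

/-- The generator h_i. -/
noncomputable def Hg {n : ℕ} (i : Fin (n + 2)) : FL n :=
  FreeLieAlgebra.of ℂ (Sum.inr (Sum.inl i))

/-- The generator x'_n. -/
noncomputable def Xg' (n : ℕ) : FL n :=
  FreeLieAlgebra.of ℂ (Sum.inr (Sum.inr ()))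

/-- The coefficients of the type-B relations (B2): [h_i,x_j] = aB i j • x_j. -/
def aB (n : ℕ) (i j : Fin (n + 2)) : ℂ :=
  if i = j then 2
  else if i.val = n + 1 ∧ j.val = n then -2
  else if i.val + 1 = j.val ∨ j.val + 1 = i.val then -1
  else 0

/-- The coefficients of the type-C relations (C2): [h'_i,x'_j] = aC i j • x'_j. -/
def aC (n : ℕ) (i j : Fin (n + 2)) : ℂ :=
  if i = j then 2
  else if i.val = n ∧ j.val = n + 1 then -2
  else if (i.val + 1 = j.val ∨ j.val + 1 = i.val) ∧ j.val ≠ n + 1 then -1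
  else 0

/-- The generator x'_i of the type-C Borel: x'_i = x_i for i < N, x'_N = x'_n. -/
noncomputable def xC {n : ℕ} (i : Fin (n + 2)) : FL n :=
  if i.val = n + 1 then Xg' n else Xg i

/-- The generator h'_i of the type-C Borel: h'_i = h_i for i < N, h'_N = (1/2)h_N. -/
noncomputable def hC {n : ℕ} (i : Fin (n + 2)) : FL n :=
  if i.val = n + 1 then (2 : ℂ)⁻¹ • Hg i else Hg i

/-- The Serre relations (B3) among the x_i (for i ≠ j). -/
noncomputable def serreB {n : ℕ} (i j : Fin (n + 2)) : FL n :=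
  if i.val = n + 1 ∧ j.val = n then ⁅Xg i, ⁅Xg i, ⁅Xg i, Xg j⁆⁆⁆
  else if i.val + 1 = j.val ∨ j.val + 1 = i.val then ⁅Xg i, ⁅Xg i, Xg j⁆⁆
  else ⁅Xg i, Xg j⁆

/-- The Serre relations (C3) among the x'_i (for i ≠ j). -/
noncomputable def serreC {n : ℕ} (i j : Fin (n + 2)) : FL n :=
  if i.val = n ∧ j.val = n + 1 then ⁅xC i, ⁅xC i, ⁅xC i, xC j⁆⁆⁆
  else if (i.val + 1 = j.val ∨ j.val + 1 = i.val) ∧ j.val ≠ n + 1 then ⁅xC i, ⁅xC i, xC j⁆⁆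
  else ⁅xC i, xC j⁆

/-- The set of relations (BC1), (BC2), (BC3) of the Lie algebra 𝔤 of type BC⁺. -/
noncomputable def RelBC (n : ℕ) : Set (FL n) :=
  (Set.range fun p : Fin (n + 2) × Fin (n + 2) => ⁅Hg p.1, Hg p.2⁆) ∪
  (Set.range fun p : Fin (n + 2) × Fin (n + 2) =>
    ⁅Hg p.1, Xg p.2⁆ - aB n p.1 p.2 • Xg p.2) ∪
  (Set.range fun p : {q : Fin (n + 2) × Fin (n + 2) // q.1 ≠ q.2} =>
    serreB p.1.1 p.1.2) ∪
  (Set.range fun p : Fin (n + 2) × Fin (n + 2) => ⁅hC p.1, hC p.2⁆) ∪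
  (Set.range fun p : Fin (n + 2) × Fin (n + 2) =>
    ⁅hC p.1, xC p.2⁆ - aC n p.1 p.2 • xC p.2) ∪
  (Set.range fun p : {q : Fin (n + 2) × Fin (n + 2) // q.1 ≠ q.2} =>
    serreC p.1.1 p.1.2) ∪
  {⁅Xg (⟨n + 1, by omega⟩ : Fin (n + 2)), Xg' n⁆,
   ⁅⁅Xg (⟨n, by omega⟩ : Fin (n + 2)), Xg (⟨n + 1, by omega⟩ : Fin (n + 2))⁆, Xg' n⁆}

/-- The Lie ideal of the free Lie algebra generated by the relations. -/
noncomputable def IdBC (n : ℕ) : LieIdeal ℂ (FL n) :=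
  LieSubmodule.lieSpan ℂ (FL n) (RelBC n)

/-- The Lie algebra 𝔤 of type BC⁺, presented by generators and relations. -/
abbrev gBC (n : ℕ) : Type := FL n ⧸ IdBC n

/-- The image of x_i in 𝔤. -/
noncomputable def xg {n : ℕ} (i : Fin (n + 2)) : gBC n :=
  LieSubmodule.Quotient.mk (N := IdBC n) (Xg i)

/-- The image of h_i in 𝔤. -/
noncomputable def hg {n : ℕ} (i : Fin (n + 2)) : gBC n :=
  LieSubmodule.Quotient.mk (N := IdBC n) (Hg i)

/-- The image of x'_n in 𝔤. -/
noncomputable def xg' (n : ℕ) : gBC n :=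
  LieSubmodule.Quotient.mk (N := IdBC n) (Xg' n)

/-- The free complex Lie algebra on generators x_1,…,x_N, h_1,…,h_N. -/
abbrev FB (n : ℕ) : Type := FreeLieAlgebra ℂ (Fin (n + 2) ⊕ Fin (n + 2))

/-- The generator x_i of the free Lie algebra for the Borel presentations. -/
noncomputable def XB {n : ℕ} (i : Fin (n + 2)) : FB n :=
  FreeLieAlgebra.of ℂ (Sum.inl i)

/-- The generator h_i of the free Lie algebra for the Borel presentations. -/
noncomputable def HB {n : ℕ} (i : Fin (n + 2)) : FB n :=
  FreeLieAlgebra.of ℂ (Sum.inr i)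

/-- The Serre relations (B3) in the free Lie algebra on x_i, h_i. -/
noncomputable def serreBB {n : ℕ} (i j : Fin (n + 2)) : FB n :=
  if i.val = n + 1 ∧ j.val = n then ⁅XB i, ⁅XB i, ⁅XB i, XB j⁆⁆⁆
  else if i.val + 1 = j.val ∨ j.val + 1 = i.val then ⁅XB i, ⁅XB i, XB j⁆⁆
  else ⁅XB i, XB j⁆

/-- The Serre relations (C3) in the free Lie algebra on x_i, h_i. -/
noncomputable def serreCC {n : ℕ} (i j : Fin (n + 2)) : FB n :=
  if i.val = n ∧ j.val = n + 1 then ⁅XB i, ⁅XB i, ⁅XB i, XB j⁆⁆⁆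
  else if (i.val + 1 = j.val ∨ j.val + 1 = i.val) ∧ j.val ≠ n + 1 then ⁅XB i, ⁅XB i, XB j⁆⁆
  else ⁅XB i, XB j⁆

/-- The relations (B1)-(B3) of the Borel subalgebra of type B_N. -/
noncomputable def RelB (n : ℕ) : Set (FB n) :=
  (Set.range fun p : Fin (n + 2) × Fin (n + 2) => ⁅HB p.1, HB p.2⁆) ∪
  (Set.range fun p : Fin (n + 2) × Fin (n + 2) =>
    ⁅HB p.1, XB p.2⁆ - aB n p.1 p.2 • XB p.2) ∪
  (Set.range fun p : {q : Fin (n + 2) × Fin (n + 2) // q.1 ≠ q.2} =>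
    serreBB p.1.1 p.1.2)

/-- The relations (C1)-(C3) of the Borel subalgebra of type C_N. -/
noncomputable def RelC (n : ℕ) : Set (FB n) :=
  (Set.range fun p : Fin (n + 2) × Fin (n + 2) => ⁅HB p.1, HB p.2⁆) ∪
  (Set.range fun p : Fin (n + 2) × Fin (n + 2) =>
    ⁅HB p.1, XB p.2⁆ - aC n p.1 p.2 • XB p.2) ∪
  (Set.range fun p : {q : Fin (n + 2) × Fin (n + 2) // q.1 ≠ q.2} =>
    serreCC p.1.1 p.1.2)

/-- The Borel subalgebra of type B_N, presented by generators and relations. -/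
abbrev borelB (n : ℕ) : Type :=
  FB n ⧸ LieSubmodule.lieSpan ℂ (FB n) (RelB n)

/-- The Borel subalgebra of type C_N, presented by generators and relations. -/
abbrev borelC (n : ℕ) : Type :=
  FB n ⧸ LieSubmodule.lieSpan ℂ (FB n) (RelC n)

section Q
variable {R : Type*} {L L' : Type*} [CommRing R] [LieRing L] [LieAlgebra R L]
  [LieRing L'] [LieAlgebra R L']

noncomputable def myMkHom (I : LieIdeal R L) : L →ₗ⁅R⁆ L ⧸ I :=
  { toLinearMap := (I : Submodule R L).mkQ, map_lie' := fun {_ _} => rfl }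

@[simp] theorem myMkHom_apply (I : LieIdeal R L) (x : L) :
    myMkHom I x = LieSubmodule.Quotient.mk (N := I) x := rfl

noncomputable def myQlift (I : LieIdeal R L) (f : L →ₗ⁅R⁆ L') (h : ∀ x ∈ I, f x = 0) :
    (L ⧸ I) →ₗ⁅R⁆ L' :=
  { toLinearMap := (I : Submodule R L).liftQ f.toLinearMap h
    map_lie' := by rintro ⟨x⟩ ⟨y⟩; exact f.map_lie x y }

@[simp] theorem myQlift_mk (I : LieIdeal R L) (f : L →ₗ⁅R⁆ L') (h : ∀ x ∈ I, f x = 0) (x : L) :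
    myQlift I f h (LieSubmodule.Quotient.mk (N := I) x) = f x := rfl

theorem myQext {I : LieIdeal R L} {F G : (L ⧸ I) →ₗ⁅R⁆ L'}
    (h : ∀ x : L, F (LieSubmodule.Quotient.mk (N := I) x)
      = G (LieSubmodule.Quotient.mk (N := I) x)) : F = G := by
  ext z
  obtain ⟨x, rfl⟩ := LieSubmodule.Quotient.surjective_mk' I z
  exact h x
end Q

/-! ### The four Lie algebra homs between free Lie algebras -/

noncomputable def fB (n : ℕ) : FL n →ₗ⁅ℂ⁆ FB n :=
  FreeLieAlgebra.lift ℂ (Sum.elim (fun i => XB i) (Sum.elim (fun i => HB i) (fun _ => 0)))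

noncomputable def gB (n : ℕ) : FB n →ₗ⁅ℂ⁆ FL n :=
  FreeLieAlgebra.lift ℂ (Sum.elim (fun i => Xg i) (fun i => Hg i))

noncomputable def fC (n : ℕ) : FL n →ₗ⁅ℂ⁆ FB n :=
  FreeLieAlgebra.lift ℂ (Sum.elim
    (fun i => if i.val = n + 1 then 0 else XB i)
    (Sum.elim (fun i => if i.val = n + 1 then (2 : ℂ) • HB i else HB i)
      (fun _ => XB (⟨n + 1, by omega⟩ : Fin (n + 2)))))

noncomputable def gC (n : ℕ) : FB n →ₗ⁅ℂ⁆ FL n :=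
  FreeLieAlgebra.lift ℂ (Sum.elim (fun i => xC i) (fun i => hC i))

variable {n : ℕ}

@[simp] theorem fB_Xg (i : Fin (n + 2)) : fB n (Xg i) = XB i := by
  simp [fB, Xg, FreeLieAlgebra.lift_of_apply]
@[simp] theorem fB_Hg (i : Fin (n + 2)) : fB n (Hg i) = HB i := by
  simp [fB, Hg, FreeLieAlgebra.lift_of_apply]
@[simp] theorem fB_Xg' : fB n (Xg' n) = 0 := by
  simp [fB, Xg', FreeLieAlgebra.lift_of_apply]

@[simp] theorem gB_XB (i : Fin (n + 2)) : gB n (XB i) = Xg i := by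
  simp [gB, XB, FreeLieAlgebra.lift_of_apply]
@[simp] theorem gB_HB (i : Fin (n + 2)) : gB n (HB i) = Hg i := by
  simp [gB, HB, FreeLieAlgebra.lift_of_apply]

@[simp] theorem fC_Xg (i : Fin (n + 2)) :
    fC n (Xg i) = if i.val = n + 1 then 0 else XB i := by
  simp [fC, Xg, FreeLieAlgebra.lift_of_apply]
@[simp] theorem fC_Hg (i : Fin (n + 2)) :
    fC n (Hg i) = if i.val = n + 1 then (2 : ℂ) • HB i else HB i := by
  simp [fC, Hg, FreeLieAlgebra.lift_of_apply]
@[simp] theorem fC_Xg' : fC n (Xg' n) = XB (⟨n + 1, by omega⟩ : Fin (n + 2)) := by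
  simp [fC, Xg', FreeLieAlgebra.lift_of_apply]

@[simp] theorem gC_XB (i : Fin (n + 2)) : gC n (XB i) = xC i := by
  simp [gC, XB, FreeLieAlgebra.lift_of_apply]
@[simp] theorem gC_HB (i : Fin (n + 2)) : gC n (HB i) = hC i := by
  simp [gC, HB, FreeLieAlgebra.lift_of_apply]

theorem fB_xC (i : Fin (n + 2)) : fB n (xC i) = if i.val = n + 1 then 0 else XB i := by
  unfold xC; split_ifs <;> simp
theorem fB_hC (i : Fin (n + 2)) :
    fB n (hC i) = if i.val = n + 1 then (2 : ℂ)⁻¹ • HB i else HB i := by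
  unfold hC; split_ifs <;> first | simp | (rw [LieHom.map_smul]; simp)

theorem fC_xC (i : Fin (n + 2)) : fC n (xC i) = XB i := by
  unfold xC; split_ifs with h
  · rw [fC_Xg']; congr 1; exact Fin.ext h.symm
  · simp [h]
theorem fC_hC (i : Fin (n + 2)) : fC n (hC i) = HB i := by
  unfold hC; split_ifs with h
  · rw [map_smul, fC_Hg, if_pos h, smul_smul]; norm_num
  · simp [h]

/-! ### Membership of the relations -/

theorem mem_RelBC₁ (i j : Fin (n + 2)) : ⁅Hg i, Hg j⁆ ∈ RelBC n :=
  Or.inl (Or.inl (Or.inl (Or.inl (Or.inl (Or.inl ⟨(i, j), rfl⟩)))))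
theorem mem_RelBC₂ (i j : Fin (n + 2)) :
    ⁅Hg i, Xg j⁆ - aB n i j • Xg j ∈ RelBC n :=
  Or.inl (Or.inl (Or.inl (Or.inl (Or.inl (Or.inr ⟨(i, j), rfl⟩)))))
theorem mem_RelBC₃ {i j : Fin (n + 2)} (h : i ≠ j) : serreB i j ∈ RelBC n :=
  Or.inl (Or.inl (Or.inl (Or.inl (Or.inr ⟨⟨(i, j), h⟩, rfl⟩))))
theorem mem_RelBC₄ (i j : Fin (n + 2)) : ⁅hC i, hC j⁆ ∈ RelBC n :=
  Or.inl (Or.inl (Or.inl (Or.inr ⟨(i, j), rfl⟩)))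
theorem mem_RelBC₅ (i j : Fin (n + 2)) :
    ⁅hC i, xC j⁆ - aC n i j • xC j ∈ RelBC n :=
  Or.inl (Or.inl (Or.inr ⟨(i, j), rfl⟩))
theorem mem_RelBC₆ {i j : Fin (n + 2)} (h : i ≠ j) : serreC i j ∈ RelBC n :=
  Or.inl (Or.inr ⟨⟨(i, j), h⟩, rfl⟩)

theorem mem_RelB₁ (i j : Fin (n + 2)) : ⁅HB i, HB j⁆ ∈ RelB n :=
  Or.inl (Or.inl ⟨(i, j), rfl⟩)
theorem mem_RelB₂ (i j : Fin (n + 2)) :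
    ⁅HB i, XB j⁆ - aB n i j • XB j ∈ RelB n :=
  Or.inl (Or.inr ⟨(i, j), rfl⟩)
theorem mem_RelB₃ {i j : Fin (n + 2)} (h : i ≠ j) : serreBB i j ∈ RelB n :=
  Or.inr ⟨⟨(i, j), h⟩, rfl⟩

theorem mem_RelC₁ (i j : Fin (n + 2)) : ⁅HB i, HB j⁆ ∈ RelC n :=
  Or.inl (Or.inl ⟨(i, j), rfl⟩)
theorem mem_RelC₂ (i j : Fin (n + 2)) :
    ⁅HB i, XB j⁆ - aC n i j • XB j ∈ RelC n :=
  Or.inl (Or.inr ⟨(i, j), rfl⟩)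
theorem mem_RelC₃ {i j : Fin (n + 2)} (h : i ≠ j) : serreCC i j ∈ RelC n :=
  Or.inr ⟨⟨(i, j), h⟩, rfl⟩

/-! ### Coefficient comparisons -/

theorem aB_eq_aC {i j : Fin (n + 2)} (hi : i.val ≠ n + 1) (hj : j.val ≠ n + 1) :
    aB n i j = aC n i j := by
  unfold aB aC
  simp only [Fin.ext_iff]
  split_ifs <;> first | omega | norm_num

theorem aB_eq_two_aC {i j : Fin (n + 2)} (hi : i.val = n + 1) (hj : j.val ≠ n + 1) :
    aB n i j = 2 * aC n i j := by
  unfold aB aC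
  simp only [Fin.ext_iff]
  split_ifs <;> first | omega | norm_num

/-! ### The key kernel lemmas -/

theorem key_fB : ∀ r ∈ RelBC n, fB n r ∈ LieSubmodule.lieSpan ℂ (FB n) (RelB n) := by
  rintro r ((((((⟨⟨i, j⟩, rfl⟩ | ⟨⟨i, j⟩, rfl⟩) | ⟨⟨⟨i, j⟩, hp⟩, rfl⟩) | ⟨⟨i, j⟩, rfl⟩) |
    ⟨⟨i, j⟩, rfl⟩) | ⟨⟨⟨i, j⟩, hp⟩, rfl⟩) | (rfl | rfl))
  · rw [LieHom.map_lie, fB_Hg, fB_Hg]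
    exact LieSubmodule.subset_lieSpan (mem_RelB₁ i j)
  · rw [map_sub, LieHom.map_lie, map_smul, fB_Hg, fB_Xg]
    exact LieSubmodule.subset_lieSpan (mem_RelB₂ i j)
  · have h : fB n (serreB i j) = serreBB i j := by
      unfold serreB serreBB; split_ifs <;> simp
    rw [h]; exact LieSubmodule.subset_lieSpan (mem_RelB₃ hp)
  · rw [LieHom.map_lie, fB_hC, fB_hC]
    have hz : ⁅HB i, HB j⁆ ∈ LieSubmodule.lieSpan ℂ (FB n) (RelB n) :=
      LieSubmodule.subset_lieSpan (mem_RelB₁ i j)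
    split_ifs
    · rw [smul_lie, lie_smul]
      exact SMulMemClass.smul_mem _ (SMulMemClass.smul_mem _ hz)
    · rw [smul_lie]; exact SMulMemClass.smul_mem _ hz
    · rw [lie_smul]; exact SMulMemClass.smul_mem _ hz
    · exact hz
  · rw [map_sub, LieHom.map_lie, map_smul, fB_hC, fB_xC]
    dsimp only
    by_cases hj : j.val = n + 1
    · rw [if_pos hj]; simp only [lie_zero, smul_zero, sub_zero]; exact zero_mem _
    · rw [if_neg hj]
      by_cases hi : i.val = n + 1
      · rw [if_pos hi, smul_lie]
        have hz : ⁅HB i, XB j⁆ - aB n i j • XB j ∈ LieSubmodule.lieSpan ℂ (FB n) (RelB n) :=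
          LieSubmodule.subset_lieSpan (mem_RelB₂ i j)
        have key : ((2 : ℂ)⁻¹) • (⁅HB i, XB j⁆ - aB n i j • XB j)
            = (2 : ℂ)⁻¹ • ⁅HB i, XB j⁆ - aC n i j • XB j := by
          rw [aB_eq_two_aC hi hj]; module
        rw [← key]; exact SMulMemClass.smul_mem _ hz
      · rw [if_neg hi, ← aB_eq_aC hi hj]
        exact LieSubmodule.subset_lieSpan (mem_RelB₂ i j)
  · by_cases hij : i.val = n + 1 ∨ j.val = n + 1
    · have h : fB n (serreC i j) = 0 := by
        unfold serreC
        rcases hij with hi | hj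
        · split_ifs with h1 h2 <;> first | omega | simp [fB_xC, hi]
        · split_ifs with h1 h2 <;> first | omega | simp [fB_xC, hj]
      rw [h]; exact zero_mem _
    · push_neg at hij
      obtain ⟨hi, hj⟩ := hij
      have h : fB n (serreC i j) = serreBB i j := by
        unfold serreC serreBB
        rw [if_neg (by omega : ¬(i.val = n ∧ j.val = n + 1)),
          if_neg (by omega : ¬(i.val = n + 1 ∧ j.val = n))]
        by_cases hadj : i.val + 1 = j.val ∨ j.val + 1 = i.val
        · rw [if_pos ⟨hadj, hj⟩, if_pos hadj]; simp [fB_xC, hi, hj]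
        · rw [if_neg (fun h => hadj h.1), if_neg hadj]; simp [fB_xC, hi, hj]
      rw [h]; exact LieSubmodule.subset_lieSpan (mem_RelB₃ hp)
  · have h : fB n ⁅Xg (⟨n + 1, by omega⟩ : Fin (n + 2)), Xg' n⁆ = 0 := by
      rw [LieHom.map_lie]; simp
    rw [h]; exact zero_mem _
  · have h : fB n ⁅⁅Xg (⟨n, by omega⟩ : Fin (n + 2)), Xg (⟨n + 1, by omega⟩ : Fin (n + 2))⁆,
        Xg' n⁆ = 0 := by
      rw [LieHom.map_lie]; simp
    rw [h]; exact zero_mem _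

theorem key_gB : ∀ r ∈ RelB n, gB n r ∈ LieSubmodule.lieSpan ℂ (FL n) (RelBC n) := by
  rintro r ((⟨⟨i, j⟩, rfl⟩ | ⟨⟨i, j⟩, rfl⟩) | ⟨⟨⟨i, j⟩, hp⟩, rfl⟩)
  · rw [LieHom.map_lie, gB_HB, gB_HB]
    exact LieSubmodule.subset_lieSpan (mem_RelBC₁ i j)
  · rw [map_sub, LieHom.map_lie, map_smul, gB_HB, gB_XB]
    exact LieSubmodule.subset_lieSpan (mem_RelBC₂ i j)
  · have h : gB n (serreBB i j) = serreB i j := by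
      unfold serreBB serreB; split_ifs <;> simp
    rw [h]; exact LieSubmodule.subset_lieSpan (mem_RelBC₃ hp)

theorem key_gC : ∀ r ∈ RelC n, gC n r ∈ LieSubmodule.lieSpan ℂ (FL n) (RelBC n) := by
  rintro r ((⟨⟨i, j⟩, rfl⟩ | ⟨⟨i, j⟩, rfl⟩) | ⟨⟨⟨i, j⟩, hp⟩, rfl⟩)
  · rw [LieHom.map_lie, gC_HB, gC_HB]
    exact LieSubmodule.subset_lieSpan (mem_RelBC₄ i j)
  · rw [map_sub, LieHom.map_lie, map_smul, gC_HB, gC_XB]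
    exact LieSubmodule.subset_lieSpan (mem_RelBC₅ i j)
  · have h : gC n (serreCC i j) = serreC i j := by
      unfold serreCC serreC; split_ifs <;> simp
    rw [h]; exact LieSubmodule.subset_lieSpan (mem_RelBC₆ hp)

theorem key_fC : ∀ r ∈ RelBC n, fC n r ∈ LieSubmodule.lieSpan ℂ (FB n) (RelC n) := by
  rintro r ((((((⟨⟨i, j⟩, rfl⟩ | ⟨⟨i, j⟩, rfl⟩) | ⟨⟨⟨i, j⟩, hp⟩, rfl⟩) | ⟨⟨i, j⟩, rfl⟩) |
    ⟨⟨i, j⟩, rfl⟩) | ⟨⟨⟨i, j⟩, hp⟩, rfl⟩) | (rfl | rfl))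
  · rw [LieHom.map_lie, fC_Hg, fC_Hg]
    have hz : ⁅HB i, HB j⁆ ∈ LieSubmodule.lieSpan ℂ (FB n) (RelC n) :=
      LieSubmodule.subset_lieSpan (mem_RelC₁ i j)
    split_ifs
    · rw [smul_lie, lie_smul]
      exact SMulMemClass.smul_mem _ (SMulMemClass.smul_mem _ hz)
    · rw [smul_lie]; exact SMulMemClass.smul_mem _ hz
    · rw [lie_smul]; exact SMulMemClass.smul_mem _ hz
    · exact hz
  · rw [map_sub, LieHom.map_lie, map_smul, fC_Hg, fC_Xg]
    dsimp only
    by_cases hj : j.val = n + 1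
    · rw [if_pos hj]; simp only [lie_zero, smul_zero, sub_zero]; exact zero_mem _
    · rw [if_neg hj]
      by_cases hi : i.val = n + 1
      · rw [if_pos hi, smul_lie]
        have hz : ⁅HB i, XB j⁆ - aC n i j • XB j ∈ LieSubmodule.lieSpan ℂ (FB n) (RelC n) :=
          LieSubmodule.subset_lieSpan (mem_RelC₂ i j)
        have key : (2 : ℂ) • (⁅HB i, XB j⁆ - aC n i j • XB j)
            = (2 : ℂ) • ⁅HB i, XB j⁆ - aB n i j • XB j := by
          rw [aB_eq_two_aC hi hj]; module
        rw [← key]; exact SMulMemClass.smul_mem _ hz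
      · rw [if_neg hi, aB_eq_aC hi hj]
        exact LieSubmodule.subset_lieSpan (mem_RelC₂ i j)
  · by_cases hij : i.val = n + 1 ∨ j.val = n + 1
    · have h : fC n (serreB i j) = 0 := by
        unfold serreB
        rcases hij with hi | hj
        · split_ifs with h1 h2 <;> simp [hi]
        · by_cases hi : i.val = n + 1
          · split_ifs with h1 h2 <;> simp [hi]
          · split_ifs with h1 h2 <;> first | omega | simp [hj]
      rw [h]; exact zero_mem _
    · push_neg at hij
      obtain ⟨hi, hj⟩ := hij
      have h : fC n (serreB i j) = serreCC i j := by
        unfold serreB serreCC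
        rw [if_neg (by omega : ¬(i.val = n + 1 ∧ j.val = n)),
          if_neg (by omega : ¬(i.val = n ∧ j.val = n + 1))]
        by_cases hadj : i.val + 1 = j.val ∨ j.val + 1 = i.val
        · rw [if_pos hadj, if_pos ⟨hadj, hj⟩]; simp [hi, hj]
        · rw [if_neg hadj, if_neg (fun h => hadj h.1)]; simp [hi, hj]
      rw [h]; exact LieSubmodule.subset_lieSpan (mem_RelC₃ hp)
  · rw [LieHom.map_lie, fC_hC, fC_hC]
    exact LieSubmodule.subset_lieSpan (mem_RelC₁ i j)
  · rw [map_sub, LieHom.map_lie, map_smul, fC_hC, fC_xC]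
    exact LieSubmodule.subset_lieSpan (mem_RelC₂ i j)
  · have h : fC n (serreC i j) = serreCC i j := by
      unfold serreC serreCC; split_ifs <;> simp [fC_xC]
    rw [h]; exact LieSubmodule.subset_lieSpan (mem_RelC₃ hp)
  · have h : fC n ⁅Xg (⟨n + 1, by omega⟩ : Fin (n + 2)), Xg' n⁆ = 0 := by
      rw [LieHom.map_lie]; simp
    rw [h]; exact zero_mem _
  · have h : fC n ⁅⁅Xg (⟨n, by omega⟩ : Fin (n + 2)), Xg (⟨n + 1, by omega⟩ : Fin (n + 2))⁆,
        Xg' n⁆ = 0 := by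
      rw [LieHom.map_lie, LieHom.map_lie]; simp
    rw [h]; exact zero_mem _

@[simp] theorem of_inl_FB {n : ℕ} (i : Fin (n + 2)) :
    (FreeLieAlgebra.of ℂ (Sum.inl i : Fin (n + 2) ⊕ Fin (n + 2))) = XB i := rfl
@[simp] theorem of_inr_FB {n : ℕ} (i : Fin (n + 2)) :
    (FreeLieAlgebra.of ℂ (Sum.inr i : Fin (n + 2) ⊕ Fin (n + 2))) = HB i := rfl
@[simp] theorem of_inl_FL {n : ℕ} (i : Fin (n + 2)) :
    (FreeLieAlgebra.of ℂ (Sum.inl i : Fin (n + 2) ⊕ (Fin (n + 2) ⊕ Unit))) = Xg i := rfl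
@[simp] theorem of_inrl_FL {n : ℕ} (i : Fin (n + 2)) :
    (FreeLieAlgebra.of ℂ (Sum.inr (Sum.inl i) : Fin (n + 2) ⊕ (Fin (n + 2) ⊕ Unit))) = Hg i :=
  rfl
@[simp] theorem of_inrr_FL {n : ℕ} :
    (FreeLieAlgebra.of ℂ (Sum.inr (Sum.inr ()) : Fin (n + 2) ⊕ (Fin (n + 2) ⊕ Unit)))
      = Xg' n := rfl

/-! ### Assembly: the isomorphism of type B -/

section Assemble

variable (n : ℕ)

noncomputable def PhiB : FL n →ₗ⁅ℂ⁆ borelB n :=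
  (myMkHom (LieSubmodule.lieSpan ℂ (FB n) (RelB n))).comp (fB n)

theorem PhiB_ker : ∀ x ∈ IdBC n, PhiB n x = 0 := by
  have h : IdBC n ≤ (PhiB n).ker := by
    apply LieSubmodule.lieSpan_le.mpr
    intro r hr
    rw [SetLike.mem_coe, LieHom.mem_ker]
    simp only [PhiB, LieHom.comp_apply, myMkHom_apply]
    rw [LieSubmodule.Quotient.mk_eq_zero']
    exact key_fB r hr
  exact fun x hx => LieHom.mem_ker.mp (h hx)

noncomputable def phiB : gBC n →ₗ⁅ℂ⁆ borelB n := myQlift (IdBC n) (PhiB n) (PhiB_ker n)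

theorem phiB_ker : ∀ x ∈ LieSubmodule.lieSpan ℂ (gBC n) {xg' n}, phiB n x = 0 := by
  have h : LieSubmodule.lieSpan ℂ (gBC n) {xg' n} ≤ (phiB n).ker := by
    apply LieSubmodule.lieSpan_le.mpr
    intro r hr
    rw [SetLike.mem_coe, LieHom.mem_ker]
    rw [Set.mem_singleton_iff] at hr
    subst hr
    show phiB n (LieSubmodule.Quotient.mk (N := IdBC n) (Xg' n)) = 0
    rw [phiB, myQlift_mk]
    simp [PhiB]
  exact fun x hx => LieHom.mem_ker.mp (h hx)

noncomputable def phiB2 :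
    (gBC n ⧸ LieSubmodule.lieSpan ℂ (gBC n) {xg' n}) →ₗ⁅ℂ⁆ borelB n :=
  myQlift _ (phiB n) (phiB_ker n)

noncomputable def PsiB : FB n →ₗ⁅ℂ⁆ (gBC n ⧸ LieSubmodule.lieSpan ℂ (gBC n) {xg' n}) :=
  (myMkHom (LieSubmodule.lieSpan ℂ (gBC n) {xg' n})).comp
    ((myMkHom (IdBC n)).comp (gB n))

theorem PsiB_ker : ∀ x ∈ LieSubmodule.lieSpan ℂ (FB n) (RelB n), PsiB n x = 0 := by
  have h : LieSubmodule.lieSpan ℂ (FB n) (RelB n) ≤ (PsiB n).ker := by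
    apply LieSubmodule.lieSpan_le.mpr
    intro r hr
    rw [SetLike.mem_coe, LieHom.mem_ker]
    simp only [PsiB, LieHom.comp_apply, myMkHom_apply]
    have h0 : LieSubmodule.Quotient.mk (N := IdBC n) (gB n r) = 0 := by
      rw [LieSubmodule.Quotient.mk_eq_zero']
      exact key_gB r hr
    rw [h0]
    exact (LieSubmodule.Quotient.mk' _).map_zero
  exact fun x hx => LieHom.mem_ker.mp (h hx)

noncomputable def psiB :
    borelB n →ₗ⁅ℂ⁆ (gBC n ⧸ LieSubmodule.lieSpan ℂ (gBC n) {xg' n}) :=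
  myQlift _ (PsiB n) (PsiB_ker n)

theorem B_right_inv : ((phiB2 n).comp (psiB n)).comp
    (myMkHom (LieSubmodule.lieSpan ℂ (FB n) (RelB n)))
    = myMkHom (LieSubmodule.lieSpan ℂ (FB n) (RelB n)) := by
  apply FreeLieAlgebra.hom_ext
  rintro (i | i) <;>
    simp [phiB2, psiB, PsiB, phiB, PhiB]

theorem B_left_inv : ((psiB n).comp (phiB2 n)).comp
    ((myMkHom (LieSubmodule.lieSpan ℂ (gBC n) {xg' n})).comp (myMkHom (IdBC n)))
    = (myMkHom (LieSubmodule.lieSpan ℂ (gBC n) {xg' n})).comp (myMkHom (IdBC n)) := by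
  apply FreeLieAlgebra.hom_ext
  rintro (i | (i | ⟨⟩))
  · simp [phiB2, psiB, PsiB, phiB, PhiB]
  · simp [phiB2, psiB, PsiB, phiB, PhiB]
  · have h0 : (myMkHom (LieSubmodule.lieSpan ℂ (gBC n) {xg' n}))
        ((myMkHom (IdBC n)) (FreeLieAlgebra.of ℂ (Sum.inr (Sum.inr ())))) = 0 := by
      rw [myMkHom_apply, myMkHom_apply, LieSubmodule.Quotient.mk_eq_zero']
      exact LieSubmodule.subset_lieSpan rfl
    simp only [LieHom.comp_apply] at h0 ⊢
    rw [h0]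
    have h1 : phiB2 n (0 : gBC n ⧸ LieSubmodule.lieSpan ℂ (gBC n) {xg' n}) = 0 :=
      (phiB2 n).map_zero
    rw [h1]
    exact (psiB n).map_zero

end Assemble

/-! ### Assembly: the isomorphism of type C -/

section AssembleC

variable (n : ℕ)

noncomputable def PhiC : FL n →ₗ⁅ℂ⁆ borelC n :=
  (myMkHom (LieSubmodule.lieSpan ℂ (FB n) (RelC n))).comp (fC n)

theorem PhiC_ker : ∀ x ∈ IdBC n, PhiC n x = 0 := by
  have h : IdBC n ≤ (PhiC n).ker := by
    apply LieSubmodule.lieSpan_le.mpr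
    intro r hr
    rw [SetLike.mem_coe, LieHom.mem_ker]
    simp only [PhiC, LieHom.comp_apply, myMkHom_apply]
    rw [LieSubmodule.Quotient.mk_eq_zero']
    exact key_fC r hr
  exact fun x hx => LieHom.mem_ker.mp (h hx)

noncomputable def phiC : gBC n →ₗ⁅ℂ⁆ borelC n := myQlift (IdBC n) (PhiC n) (PhiC_ker n)

theorem phiC_ker : ∀ x ∈ LieSubmodule.lieSpan ℂ (gBC n)
    {xg (⟨n + 1, by omega⟩ : Fin (n + 2))}, phiC n x = 0 := by
  have h : LieSubmodule.lieSpan ℂ (gBC n) {xg (⟨n + 1, by omega⟩ : Fin (n + 2))}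
      ≤ (phiC n).ker := by
    apply LieSubmodule.lieSpan_le.mpr
    intro r hr
    rw [SetLike.mem_coe, LieHom.mem_ker]
    rw [Set.mem_singleton_iff] at hr
    subst hr
    show phiC n (LieSubmodule.Quotient.mk (N := IdBC n)
      (Xg (⟨n + 1, by omega⟩ : Fin (n + 2)))) = 0
    rw [phiC, myQlift_mk]
    simp [PhiC]
  exact fun x hx => LieHom.mem_ker.mp (h hx)

noncomputable def phiC2 :
    (gBC n ⧸ LieSubmodule.lieSpan ℂ (gBC n) {xg (⟨n + 1, by omega⟩ : Fin (n + 2))})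
      →ₗ⁅ℂ⁆ borelC n :=
  myQlift _ (phiC n) (phiC_ker n)

noncomputable def PsiC : FB n →ₗ⁅ℂ⁆
    (gBC n ⧸ LieSubmodule.lieSpan ℂ (gBC n) {xg (⟨n + 1, by omega⟩ : Fin (n + 2))}) :=
  (myMkHom (LieSubmodule.lieSpan ℂ (gBC n) {xg (⟨n + 1, by omega⟩ : Fin (n + 2))})).comp
    ((myMkHom (IdBC n)).comp (gC n))

theorem PsiC_ker : ∀ x ∈ LieSubmodule.lieSpan ℂ (FB n) (RelC n), PsiC n x = 0 := by
  have h : LieSubmodule.lieSpan ℂ (FB n) (RelC n) ≤ (PsiC n).ker := by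
    apply LieSubmodule.lieSpan_le.mpr
    intro r hr
    rw [SetLike.mem_coe, LieHom.mem_ker]
    simp only [PsiC, LieHom.comp_apply, myMkHom_apply]
    have h0 : LieSubmodule.Quotient.mk (N := IdBC n) (gC n r) = 0 := by
      rw [LieSubmodule.Quotient.mk_eq_zero']
      exact key_gC r hr
    rw [h0]
    exact (LieSubmodule.Quotient.mk' _).map_zero
  exact fun x hx => LieHom.mem_ker.mp (h hx)

noncomputable def psiC :
    borelC n →ₗ⁅ℂ⁆
      (gBC n ⧸ LieSubmodule.lieSpan ℂ (gBC n) {xg (⟨n + 1, by omega⟩ : Fin (n + 2))}) :=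
  myQlift _ (PsiC n) (PsiC_ker n)

theorem C_right_inv : ((phiC2 n).comp (psiC n)).comp
    (myMkHom (LieSubmodule.lieSpan ℂ (FB n) (RelC n)))
    = myMkHom (LieSubmodule.lieSpan ℂ (FB n) (RelC n)) := by
  apply FreeLieAlgebra.hom_ext
  rintro (i | i) <;>
    simp [phiC2, psiC, PsiC, phiC, PhiC, fC_xC, fC_hC]

theorem C_left_inv : ((psiC n).comp (phiC2 n)).comp
    ((myMkHom (LieSubmodule.lieSpan ℂ (gBC n) {xg (⟨n + 1, by omega⟩ : Fin (n + 2))})).comp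
      (myMkHom (IdBC n)))
    = (myMkHom (LieSubmodule.lieSpan ℂ (gBC n)
        {xg (⟨n + 1, by omega⟩ : Fin (n + 2))})).comp (myMkHom (IdBC n)) := by
  apply FreeLieAlgebra.hom_ext
  rintro (i | (i | u))
  · by_cases hi : i.val = n + 1
    · have hieq : i = (⟨n + 1, by omega⟩ : Fin (n + 2)) := Fin.ext hi
      simp only [LieHom.comp_apply, myMkHom_apply, of_inl_FL]
      have h0 : (LieSubmodule.Quotient.mk (LieSubmodule.Quotient.mk (N := IdBC n)
          (Xg i)) :
          gBC n ⧸ LieSubmodule.lieSpan ℂ (gBC n)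
            {xg (⟨n + 1, by omega⟩ : Fin (n + 2))}) = 0 := by
        rw [LieSubmodule.Quotient.mk_eq_zero']
        exact LieSubmodule.subset_lieSpan
          (Set.mem_singleton_iff.mpr (congrArg xg hieq))
      rw [h0]
      have h1 : phiC2 n 0 = 0 := (phiC2 n).map_zero
      rw [h1]
      exact (psiC n).map_zero
    · simp [phiC2, psiC, PsiC, phiC, PhiC, hi, xC]
  · by_cases hi : i.val = n + 1
    · simp only [LieHom.comp_apply, myMkHom_apply, of_inrl_FL, phiC2, myQlift_mk, phiC,
        PhiC, fC_Hg, if_pos hi, psiC, PsiC]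
      rw [map_smul]
      simp only [gC_HB, hC, if_pos hi, smul_smul]
      norm_num
    · simp [phiC2, psiC, PsiC, phiC, PhiC, hi, hC]
  · cases u
    simp [phiC2, psiC, PsiC, phiC, PhiC, xC]

end AssembleC

noncomputable def eqB (n : ℕ) :
    (gBC n ⧸ LieSubmodule.lieSpan ℂ (gBC n) {xg' n}) ≃ₗ⁅ℂ⁆ borelB n :=
  { toLieHom := phiB2 n
    invFun := psiB n
    left_inv := fun z => by
      obtain ⟨w, rfl⟩ := LieSubmodule.Quotient.surjective_mk' _ z
      obtain ⟨y, rfl⟩ := LieSubmodule.Quotient.surjective_mk' _ w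
      exact DFunLike.congr_fun (B_left_inv n) y
    right_inv := fun z => by
      obtain ⟨y, rfl⟩ := LieSubmodule.Quotient.surjective_mk' _ z
      exact DFunLike.congr_fun (B_right_inv n) y }

noncomputable def eqC (n : ℕ) :
    (gBC n ⧸ LieSubmodule.lieSpan ℂ (gBC n) {xg (⟨n + 1, by omega⟩ : Fin (n + 2))})
      ≃ₗ⁅ℂ⁆ borelC n :=
  { toLieHom := phiC2 n
    invFun := psiC n
    left_inv := fun z => by
      obtain ⟨w, rfl⟩ := LieSubmodule.Quotient.surjective_mk' _ z
      obtain ⟨y, rfl⟩ := LieSubmodule.Quotient.surjective_mk' _ w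
      exact DFunLike.congr_fun (C_left_inv n) y
    right_inv := fun z => by
      obtain ⟨y, rfl⟩ := LieSubmodule.Quotient.surjective_mk' _ z
      exact DFunLike.congr_fun (C_right_inv n) y }
/-- the quotient of 𝔤 by the Lie ideal generated by x'_N is
isomorphic to the Borel subalgebra of type B_N, and the quotient by the Lie
ideal generated by x_N is isomorphic to the Borel subalgebra of type C_N. -/
theorem stmt_11 (n : ℕ) :
    Nonempty
      ((gBC n ⧸ LieSubmodule.lieSpan ℂ (gBC n) {xg' n}) ≃ₗ⁅ℂ⁆ borelB n) ∧
    Nonempty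
      ((gBC n ⧸ LieSubmodule.lieSpan ℂ (gBC n)
          {xg (⟨n + 1, by omega⟩ : Fin (n + 2))}) ≃ₗ⁅ℂ⁆ borelC n) := by
  exact ⟨⟨eqB n⟩, ⟨eqC n⟩⟩
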